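/- Let d ∈ ℕ and let μ : ℝ → ℝ satisfy the monotonicity condition: there exist constants 0 < m ≤ M such that m(t − s) ≤ μ(t²)t − μ(s²)s ≤ M(t − s) for all t ≥ s ≥ 0. Then the vector field φ(x) := μ(‖x‖²)x on the Euclidean space ℝ^d is strongly monotone with constant m: for all x, y ∈ ℝ^d, ⟨μ(‖x‖²)x − μ(‖y‖²)y, x − y⟩ ≥ m‖x − y‖². -/

import Mathlib

open scoped RealInnerProductSpace

/-- If `μ` satisfies the monotonicity condition
`m(t−s) ≤ μ(t²)t − μ(s²)s ≤ M(t−s)` for `t ≥ s ≥ 0`, then the vector field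
`x ↦ μ(‖x‖²)x` on Euclidean space is strongly monotone with constant `m`. -/
theorem carreau_vectorField_stronglyMonotone
    (d : ℕ) (μ : ℝ → ℝ) (m M : ℝ) (hm : 0 < m) (hmM : m ≤ M)
    (hμ : ∀ t s : ℝ, 0 ≤ s → s ≤ t →
      m * (t - s) ≤ μ (t ^ 2) * t - μ (s ^ 2) * s ∧
        μ (t ^ 2) * t - μ (s ^ 2) * s ≤ M * (t - s)) :
    ∀ x y : EuclideanSpace ℝ (Fin d),
      m * ‖x - y‖ ^ 2 ≤ ⟪μ (‖x‖ ^ 2) • x - μ (‖y‖ ^ 2) • y, x - y⟫ := by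
  intro x y
  set a : ℝ := ‖x‖ with ha
  set b : ℝ := ‖y‖ with hb
  set c : ℝ := ⟪x, y⟫ with hc
  have ha0 : 0 ≤ a := norm_nonneg x
  have hb0 : 0 ≤ b := norm_nonneg y
  have hcs : c ≤ a * b := real_inner_le_norm x y
  -- expand inner product
  have expand : ⟪μ (‖x‖ ^ 2) • x - μ (‖y‖ ^ 2) • y, x - y⟫
      = μ (a ^ 2) * a ^ 2 + μ (b ^ 2) * b ^ 2 - (μ (a ^ 2) + μ (b ^ 2)) * c := by
    simp only [inner_sub_left, inner_sub_right, real_inner_smul_left,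
      real_inner_self_eq_norm_sq, ← ha, ← hb, ← hc]
    rw [show (inner ℝ y x : ℝ) = c from (real_inner_comm x y).trans hc.symm]
    ring
  have hnorm : ‖x - y‖ ^ 2 = a ^ 2 - 2 * c + b ^ 2 := by
    rw [ha, hb, hc]; exact norm_sub_sq_real x y
  -- term 1
  have h1 : m * (a - b) ^ 2 ≤ (μ (a ^ 2) * a - μ (b ^ 2) * b) * (a - b) := by
    rcases le_total b a with hab | hab
    · have := (hμ a b hb0 hab).1
      nlinarith [sub_nonneg.mpr hab]
    · have := (hμ b a ha0 hab).1
      nlinarith [sub_nonneg.mpr hab]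
  -- term 2
  have h2 : 2 * m * (a * b - c) ≤ (μ (a ^ 2) + μ (b ^ 2)) * (a * b - c) := by
    by_cases hx : x = 0
    · have : a = 0 := by simp [ha, hx]
      have hc0 : c = 0 := by simp [hc, hx]
      simp [this, hc0]
    by_cases hy : y = 0
    · have : b = 0 := by simp [hb, hy]
      have hc0 : c = 0 := by simp [hc, hy]
      simp [this, hc0]
    · have hap : 0 < a := norm_pos_iff.mpr hx
      have hbp : 0 < b := norm_pos_iff.mpr hy
      have hma : m ≤ μ (a ^ 2) := by
        have := (hμ a 0 le_rfl ha0).1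
        have h0 : μ (0 ^ 2) * 0 = 0 := by ring
        rw [h0] at this
        nlinarith
      have hmb : m ≤ μ (b ^ 2) := by
        have := (hμ b 0 le_rfl hb0).1
        have h0 : μ (0 ^ 2) * 0 = 0 := by ring
        rw [h0] at this
        nlinarith
      nlinarith [sub_nonneg.mpr hcs]
  rw [expand, hnorm]
  nlinarith [h1, h2]
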